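/- arXiv:1610.04826 — 2 statements merged into one kernel-verified Lean document; each statement's English description precedes it below -/
import Mathlib

section
/- For every positive integer n and every integer k ≥ 0, d_k(n) = Σ_{i=0}^{⌊log₂ n⌋} C(k,i) f_i(n), where d_k(n) = f_k(n,1) and f_i(n) = f_i(n,2); and conversely f_k(n) = Σ_{i=0}^{k} (−1)^{k−i} C(k,i) d_i(n). -/
open Finset

/-- `f k n l` is the number of ordered `k`-tuples `(i₁, …, i_k)` of integers
with each `i_j ≥ l` and `i₁ ⋯ i_k = n`.  (For `n ≥ 1` and `l ≥ 1` every such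
factor lies in `[l, n]`, and for `k = 0` this gives `1` if `n = 1` and `0` otherwise.) -/
def f (k n l : ℕ) : ℕ :=
  ((Fintype.piFinset fun _ : Fin k => Finset.Icc l n).filter
    fun v => ∏ i, v i = n).card

/-- `F k x l = ∑_{n ≤ x} f k n l`; it equals `0` for `x < 1` and `F 0 x l = 1` for `x ≥ 1`. -/
noncomputable def F (k : ℕ) (x : ℝ) (l : ℕ) : ℕ :=
  ∑ n ∈ Finset.Icc 1 ⌊x⌋₊, f k n l

lemma fiber_card (n k : ℕ) (hn : 0 < n) (S : Finset (Fin k)) :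
    (((Fintype.piFinset fun _ : Fin k => Finset.Icc 1 n).filter
      fun v => ∏ i, v i = n).filter
        fun v => (Finset.univ.filter fun i => v i ≠ 1) = S).card = f S.card n 2 := by
  set m := S.card with hm
  let e : Fin m ≃o {x // x ∈ S} := S.orderIsoOfFin rfl
  show _ = ((Fintype.piFinset fun _ : Fin m => Finset.Icc 2 n).filter
      fun w => ∏ j, w j = n).card
  refine Finset.card_bij' (fun v _ => fun j : Fin m => v (e j))
    (fun w _ => fun x => if h : x ∈ S then w (e.symm ⟨x, h⟩) else 1) ?_ ?_ ?_ ?_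
  · -- maps to
    intro v hv
    simp only [mem_filter, Fintype.mem_piFinset, mem_Icc] at hv
    obtain ⟨⟨h1, h2⟩, h3⟩ := hv
    have hne : ∀ x, x ∈ S ↔ v x ≠ 1 := by
      intro x; rw [← h3, mem_filter]; simp
    simp only [mem_filter, Fintype.mem_piFinset, mem_Icc]
    constructor
    · intro j
      have hmem : (↑(e j) : Fin k) ∈ S := (e j).2
      have hne' := (hne _).1 hmem
      have h1' := (h1 (e j)).1
      exact ⟨by omega, (h1 (e j)).2⟩
    · rw [← h2]
      have hp : ∏ x, v x = ∏ x ∈ S, v x := by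
        rw [← Finset.prod_subset (Finset.subset_univ S)]
        intro x _ hx
        by_contra hc
        exact hx ((hne x).2 hc)
      rw [hp, ← Finset.prod_coe_sort S v]
      exact Fintype.prod_equiv e.toEquiv (fun j => v ↑(e j)) (fun x => v ↑x) (fun j => rfl)
  · -- maps back
    intro w hw
    simp only [mem_filter, Fintype.mem_piFinset, mem_Icc] at hw
    obtain ⟨h1, h2⟩ := hw
    simp only [mem_filter, Fintype.mem_piFinset, mem_Icc]
    refine ⟨⟨fun x => ?_, ?_⟩, ?_⟩
    · by_cases h : x ∈ S
      · simp only [h, dif_pos]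
        have := h1 (e.symm ⟨x, h⟩)
        omega
      · simp only [h, dif_neg, not_false_iff]
        omega
    · have hp : (∏ x : Fin k, if h : x ∈ S then w (e.symm ⟨x, h⟩) else 1)
          = ∏ x ∈ S, (if h : x ∈ S then w (e.symm ⟨x, h⟩) else 1) := by
        rw [← Finset.prod_subset (Finset.subset_univ S)]
        intro x _ hx
        simp [hx]
      rw [hp, ← Finset.prod_coe_sort S, ← h2]
      refine Fintype.prod_equiv e.symm.toEquiv _ _ (fun x => ?_)
      simp [x.2]
    · ext x
      simp only [mem_filter, mem_univ, true_and]
      by_cases h : x ∈ S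
      · simp only [h, dif_pos, iff_true]
        have := h1 (e.symm ⟨x, h⟩)
        omega
      · simp [h]
  · -- left inverse
    intro v hv
    simp only [mem_filter, Fintype.mem_piFinset, mem_Icc] at hv
    obtain ⟨⟨h1, h2⟩, h3⟩ := hv
    funext x
    by_cases h : x ∈ S
    · simp only [h, dif_pos]
      congr 1
      exact congrArg Subtype.val (e.apply_symm_apply ⟨x, h⟩)
    · simp only [h, dif_neg, not_false_iff]
      by_contra hc
      exact h (h3 ▸ mem_filter.2 ⟨mem_univ _, fun he => hc he.symm⟩)
  · -- right inverse
    intro w hw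
    funext j
    have hmem : (↑(e j) : Fin k) ∈ S := (e j).2
    simp only [hmem, dif_pos]
    congr 1
    exact e.symm_apply_apply j

lemma f_one_eq (n : ℕ) (hn : 0 < n) (k : ℕ) :
    f k n 1 = ∑ i ∈ Finset.range (k + 1), Nat.choose k i * f i n 2 := by
  have h := Finset.card_eq_sum_card_fiberwise
    (f := fun v : Fin k → ℕ => Finset.univ.filter fun i => v i ≠ 1)
    (s := (Fintype.piFinset fun _ : Fin k => Finset.Icc 1 n).filter fun v => ∏ i, v i = n)
    (t := (Finset.univ : Finset (Fin k)).powerset)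
    (fun v _ => Finset.mem_powerset.2 (Finset.subset_univ _))
  rw [f, h]
  rw [Finset.sum_congr rfl (fun S _ => fiber_card n k hn S),
    Finset.sum_powerset_apply_card (fun i => f i n 2)]
  simp [Finset.card_univ, smul_eq_mul]

lemma f_two_eq_zero (n : ℕ) (hn : 0 < n) (i : ℕ) (hi : Nat.log 2 n < i) : f i n 2 = 0 := by
  rw [f, Finset.card_eq_zero, Finset.filter_eq_empty_iff]
  intro v hv hp
  simp only [Fintype.mem_piFinset, mem_Icc] at hv
  have h2 : (2 : ℕ) ^ i ≤ n := by
    calc (2:ℕ) ^ i = 2 ^ (Finset.univ : Finset (Fin i)).card := by simp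
    _ ≤ ∏ j, v j := Finset.pow_card_le_prod _ _ _ (fun x _ => (hv x).1)
    _ = n := hp
  have := (Nat.le_log_iff_pow_le one_lt_two hn.ne').2 h2
  omega

lemma binom_inversion (g h : ℕ → ℤ)
    (hgh : ∀ k, g k = ∑ i ∈ Finset.range (k + 1), (Nat.choose k i : ℤ) * h i) (k : ℕ) :
    h k = ∑ i ∈ Finset.range (k + 1), (-1 : ℤ) ^ (k - i) * (Nat.choose k i : ℤ) * g i := by
  have key : ∀ j, ∑ i ∈ Finset.range (k + 1),
      (-1 : ℤ) ^ (k - i) * (Nat.choose k i : ℤ) * (Nat.choose i j : ℤ)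
      = if j = k then 1 else 0 := by
    intro j
    by_cases hjk : j ≤ k
    · rw [Finset.range_eq_Ico, ← Finset.sum_Ico_consecutive _ (Nat.zero_le j) (by omega : j ≤ k+1)]
      have h1 : ∑ i ∈ Finset.Ico 0 j,
          (-1 : ℤ) ^ (k - i) * (Nat.choose k i : ℤ) * (Nat.choose i j : ℤ) = 0 := by
        apply Finset.sum_eq_zero
        intro i hi
        simp only [Finset.mem_Ico] at hi
        rw [Nat.choose_eq_zero_of_lt hi.2]
        simp
      rw [h1, zero_add, Finset.sum_Ico_eq_sum_range]
      have h2 : ∀ i ∈ Finset.range (k + 1 - j),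
          (-1 : ℤ) ^ (k - (j + i)) * (Nat.choose k (j + i) : ℤ) * (Nat.choose (j + i) j : ℤ)
          = ((Nat.choose k j : ℤ) * (-1)^(k - j)) * ((-1 : ℤ) ^ i * (Nat.choose (k - j) i : ℤ)) := by
        intro i hi
        simp only [Finset.mem_range] at hi
        have hik : j + i ≤ k := by omega
        have hcm : (Nat.choose k (j+i) : ℤ) * (Nat.choose (j+i) j : ℤ)
            = (Nat.choose k j : ℤ) * (Nat.choose (k - j) i : ℤ) := by
          have := Nat.choose_mul (n := k) (Nat.le_add_right j i)
          rw [Nat.add_sub_cancel_left] at this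
          exact_mod_cast congrArg (Nat.cast : ℕ → ℤ) this
        have hsign : (-1 : ℤ) ^ (k - (j + i)) = (-1 : ℤ) ^ (k - j) * (-1 : ℤ) ^ i := by
          have hh : k - (j + i) + i = k - j := by omega
          calc (-1 : ℤ) ^ (k - (j + i)) = (-1 : ℤ) ^ (k - (j+i)) * ((-1:ℤ)^i * (-1:ℤ)^i) := by
                rw [← pow_add, ← two_mul, pow_mul]; simp
            _ = (-1 : ℤ) ^ (k - j) * (-1 : ℤ) ^ i := by
                rw [← mul_assoc, ← pow_add, hh]
        rw [hsign]
        linear_combination ((-1:ℤ)^(k-j) * (-1:ℤ)^i) * hcm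
      rw [Finset.sum_congr rfl h2, ← Finset.mul_sum]
      have hr : k + 1 - j = (k - j) + 1 := by omega
      rw [hr, Int.alternating_sum_range_choose]
      by_cases hjk' : j = k
      · subst hjk'; simp
      · have hkj : k - j ≠ 0 := by omega
        simp [hkj, hjk']
    · rw [if_neg (by omega)]
      apply Finset.sum_eq_zero
      intro i hi
      simp only [Finset.mem_range] at hi
      rw [Nat.choose_eq_zero_of_lt (by omega : i < j)]
      simp
  calc h k = ∑ j ∈ Finset.range (k + 1), if j = k then h j else 0 := by
        rw [Finset.sum_ite_eq' (Finset.range (k+1)) k h]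
        simp
    _ = ∑ j ∈ Finset.range (k + 1), (if j = k then 1 else 0) * h j := by
        apply Finset.sum_congr rfl; intro j _
        split <;> simp
    _ = ∑ j ∈ Finset.range (k + 1), (∑ i ∈ Finset.range (k + 1),
          (-1 : ℤ) ^ (k - i) * (Nat.choose k i : ℤ) * (Nat.choose i j : ℤ)) * h j := by
        apply Finset.sum_congr rfl; intro j _; rw [key j]
    _ = ∑ j ∈ Finset.range (k + 1), ∑ i ∈ Finset.range (k + 1),
          (-1 : ℤ) ^ (k - i) * (Nat.choose k i : ℤ) * ((Nat.choose i j : ℤ) * h j) := by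
        apply Finset.sum_congr rfl; intro j _
        rw [Finset.sum_mul]
        apply Finset.sum_congr rfl; intro i _; ring
    _ = ∑ i ∈ Finset.range (k + 1), ∑ j ∈ Finset.range (k + 1),
          (-1 : ℤ) ^ (k - i) * (Nat.choose k i : ℤ) * ((Nat.choose i j : ℤ) * h j) :=
        Finset.sum_comm
    _ = ∑ i ∈ Finset.range (k + 1), (-1 : ℤ) ^ (k - i) * (Nat.choose k i : ℤ) *
          ∑ j ∈ Finset.range (k + 1), (Nat.choose i j : ℤ) * h j := by
        apply Finset.sum_congr rfl; intro i _
        rw [Finset.mul_sum]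
    _ = ∑ i ∈ Finset.range (k + 1), (-1 : ℤ) ^ (k - i) * (Nat.choose k i : ℤ) * g i := by
        apply Finset.sum_congr rfl
        intro i hi
        simp only [Finset.mem_range] at hi
        congr 1
        rw [hgh i]
        rw [← Finset.sum_subset (Finset.range_subset_range.2 (by omega : i + 1 ≤ k + 1))]
        intro j _ hj
        simp only [Finset.mem_range, not_lt] at hj
        rw [Nat.choose_eq_zero_of_lt (by omega : i < j)]
        simp

theorem stmt16 (n : ℕ) (hn : 0 < n) (k : ℕ) :
    f k n 1 = ∑ i ∈ Finset.range (Nat.log 2 n + 1), Nat.choose k i * f i n 2 ∧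
    (f k n 2 : ℤ) =
      ∑ i ∈ Finset.range (k + 1),
        (-1 : ℤ) ^ (k - i) * (Nat.choose k i : ℤ) * (f i n 1 : ℤ) := by
  constructor
  · rw [f_one_eq n hn k]
    set L := Nat.log 2 n with hL
    set M := max k L with hM
    have h1 : ∑ i ∈ Finset.range (k + 1), Nat.choose k i * f i n 2
        = ∑ i ∈ Finset.range (M + 1), Nat.choose k i * f i n 2 := by
      apply Finset.sum_subset (Finset.range_subset_range.2 (by omega))
      intro i _ hi
      simp only [Finset.mem_range, not_lt] at hi
      rw [Nat.choose_eq_zero_of_lt (by omega : k < i), zero_mul]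
    have h2 : ∑ i ∈ Finset.range (L + 1), Nat.choose k i * f i n 2
        = ∑ i ∈ Finset.range (M + 1), Nat.choose k i * f i n 2 := by
      apply Finset.sum_subset (Finset.range_subset_range.2 (by omega))
      intro i _ hi
      simp only [Finset.mem_range, not_lt] at hi
      rw [f_two_eq_zero n hn i (by omega), mul_zero]
    rw [h1, h2]
  · exact binom_inversion (fun k => (f k n 1 : ℤ)) (fun k => (f k n 2 : ℤ))
      (fun k => by beta_reduce; rw [show ((f k n 1 : ℤ)) = ((∑ i ∈ Finset.range (k+1), Nat.choose k i * f i n 2 : ℕ) : ℤ) from congrArg _ (f_one_eq n hn k)]; push_cast; ring) k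
end

section
/- For every real x ≥ 1 and all positive integers k, l, F_k(x,l) = Σ_{i=0}^{τ(x,k,l)} C(k,i) F_i(x/l^{k−i}, l+1), where τ(x,k,l) = min(k, ⌈(log x − k log l)/(log(l+1) − log l)⌉); in particular every term of the sum Σ_{i=0}^{k} C(k,i) F_i(x/l^{k−i}, l+1) with index i > τ(x,k,l) vanishes. -/
open Finset

lemma fiber_card_s18 (n l k i : ℕ) (hn : 1 ≤ n) (hl : 1 ≤ l) (S : Finset (Fin k))
    (hS : #S = i) :
    #((((Fintype.piFinset fun _ : Fin k => Finset.Icc l n).filter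
        fun v => ∏ j, v j = n)).filter
      fun v => univ.filter (fun j => l + 1 ≤ v j) = S) =
    if l ^ (k - i) ∣ n then f i (n / l ^ (k - i)) (l + 1) else 0 := by
  have hik : i ≤ k := by
    simpa [hS] using card_le_card (subset_univ S)
  have hcompl : #(Sᶜ) = k - i := by
    simp [card_compl, hS]
  have hlpow : 0 < l ^ (k - i) := Nat.pow_pos hl
  -- basic facts about members of the fiber
  have hmem : ∀ v, v ∈ (((Fintype.piFinset fun _ : Fin k => Finset.Icc l n).filter
        fun v => ∏ j, v j = n)).filter
      (fun v => univ.filter (fun j => l + 1 ≤ v j) = S) →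
      (∀ j ∉ S, v j = l) ∧ (∀ j ∈ S, l + 1 ≤ v j) ∧
        (∏ j ∈ S, v j) * l ^ (k - i) = n := by
    intro v hv
    simp only [mem_filter, Fintype.mem_piFinset, mem_Icc] at hv
    obtain ⟨⟨hb, hp⟩, hset⟩ := hv
    have h1 : ∀ j ∉ S, v j = l := by
      intro j hj
      have h3 : j ∉ univ.filter (fun j => l + 1 ≤ v j) := hset ▸ hj
      simp only [mem_filter, mem_univ, true_and, not_le] at h3
      have := (hb j).1
      omega
    have h2 : ∀ j ∈ S, l + 1 ≤ v j := by
      intro j hj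
      have : j ∈ univ.filter (fun j => l + 1 ≤ v j) := hset ▸ hj
      simpa using this
    refine ⟨h1, h2, ?_⟩
    have hc : ∏ j ∈ Sᶜ, v j = l ^ (k - i) := by
      rw [← hcompl, ← prod_const]
      exact prod_congr rfl fun j hj => h1 j (by simpa using hj)
    rw [← hp, ← prod_mul_prod_compl S v, hc]
  by_cases hdvd : l ^ (k - i) ∣ n
  · rw [if_pos hdvd]
    set n' := n / l ^ (k - i) with hn'
    have hnn' : n' * l ^ (k - i) = n := Nat.div_mul_cancel hdvd
    have hn'pos : 1 ≤ n' :=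
      (Nat.one_le_div_iff hlpow).2 (Nat.le_of_dvd hn hdvd)
    have hn'n : n' ≤ n := by
      calc n' ≤ n' * l ^ (k - i) := Nat.le_mul_of_pos_right _ hlpow
      _ = n := hnn'
    have e : Fin i ≃ {x // x ∈ S} := (S.orderIsoOfFin hS).toEquiv
    unfold f
    refine Finset.card_bij' (fun v _ => fun t : Fin i => v (e t))
      (fun w _ => fun j : Fin k => if h : j ∈ S then w (e.symm ⟨j, h⟩) else l)
      ?_ ?_ ?_ ?_
    · -- forward maps into target
      intro v hv
      obtain ⟨h1, h2, h3⟩ := hmem v hv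
      have hprod : ∏ t : Fin i, v (e t) = n' := by
        have : ∏ t : Fin i, v (e t) = ∏ j ∈ S, v j := by
          rw [← prod_coe_sort S v]
          exact Equiv.prod_comp e (fun a : {x // x ∈ S} => v a)
        rw [this]
        exact Nat.eq_of_mul_eq_mul_right hlpow (by rw [hnn']; exact h3)
      simp only [mem_filter, Fintype.mem_piFinset, mem_Icc]
      refine ⟨fun t => ⟨h2 _ (e t).2, ?_⟩, hprod⟩
      · -- v (e t) ≤ n'
        have hdvd2 : v (e t) ∣ ∏ t' : Fin i, v (e t') :=
          Finset.dvd_prod_of_mem _ (mem_univ t)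
        rw [hprod] at hdvd2
        exact Nat.le_of_dvd hn'pos hdvd2
    · -- backward maps into source
      intro w hw
      simp only [mem_filter, Fintype.mem_piFinset, mem_Icc] at hw
      obtain ⟨hb, hp⟩ := hw
      have hval : ∀ (j) (h : j ∈ S), l + 1 ≤ w (e.symm ⟨j, h⟩) := fun j h => (hb _).1
      simp only [mem_filter, Fintype.mem_piFinset, mem_Icc]
      refine ⟨⟨fun j => ?_, ?_⟩, ?_⟩
      · by_cases h : j ∈ S
        · simp only [dif_pos h]
          exact ⟨le_trans (Nat.le_succ l) (hval j h), le_trans (hb _).2 hn'n⟩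
        · simp only [dif_neg h]
          refine ⟨le_refl l, ?_⟩
          have hik' : i < k := by
            by_contra hc
            have : i = k := le_antisymm hik (le_of_not_gt hc)
            have : S = univ := eq_univ_of_card S (by simp [hS, this])
            exact h (this ▸ mem_univ j)
          calc l ≤ l ^ (k - i) := Nat.le_self_pow (by omega) l
          _ ≤ n := Nat.le_of_dvd hn hdvd
      · -- product
        have hSprod : ∏ j ∈ S, (fun j : Fin k => if h : j ∈ S then w (e.symm ⟨j, h⟩) else l) j = n' := by
          rw [← prod_coe_sort S]
          have : ∀ a : {x // x ∈ S},
              (if h : (a : Fin k) ∈ S then w (e.symm ⟨a, h⟩) else l) = w (e.symm a) := by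
            intro a; rw [dif_pos a.2]
          rw [Fintype.prod_congr _ _ this, Equiv.prod_comp e.symm w, hp]
        rw [← prod_mul_prod_compl S, hSprod,
          prod_congr rfl (fun j hj => dif_neg (by simpa using hj)), prod_const, hcompl, hnn']
      · -- the filter set is S
        ext j
        simp only [mem_filter, mem_univ, true_and]
        by_cases h : j ∈ S
        · simp only [dif_pos h]
          exact ⟨fun _ => h, fun _ => hval j h⟩
        · simp only [dif_neg h]
          constructor
          · intro hc; omega
          · intro hc; exact absurd hc h
    · -- left inverse
      intro v hv
      obtain ⟨h1, _, _⟩ := hmem v hv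
      funext j
      by_cases h : j ∈ S
      · simp only [dif_pos h]
        congr 1
        exact congrArg _ (e.apply_symm_apply ⟨j, h⟩) |>.trans rfl
      · simp only [dif_neg h]
        exact (h1 j h).symm
    · -- right inverse
      intro w hw
      funext t
      simp only [dif_pos (e t).2, Subtype.coe_eta, Equiv.symm_apply_apply]
  · rw [if_neg hdvd]
    rw [Finset.card_eq_zero, Finset.eq_empty_iff_forall_notMem]
    intro v hv
    obtain ⟨_, _, h3⟩ := hmem v hv
    exact hdvd ⟨∏ j ∈ S, v j, by rw [← h3, mul_comm]⟩

lemma f_eq (n l k : ℕ) (hn : 1 ≤ n) (hl : 1 ≤ l) :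
    f k n l = ∑ i ∈ range (k + 1),
      k.choose i * (if l ^ (k - i) ∣ n then f i (n / l ^ (k - i)) (l + 1) else 0) := by
  have h0 : f k n l = ∑ S ∈ (univ : Finset (Fin k)).powerset,
      #((((Fintype.piFinset fun _ : Fin k => Finset.Icc l n).filter
        fun v => ∏ j, v j = n)).filter
      fun v => univ.filter (fun j => l + 1 ≤ v j) = S) := by
    exact Finset.card_eq_sum_card_fiberwise (fun v _ => mem_powerset.2 (subset_univ _))
  rw [h0, Finset.sum_powerset]
  rw [card_univ, Fintype.card_fin]
  refine Finset.sum_congr rfl fun i hi => ?_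
  have : ∀ S ∈ powersetCard i (univ : Finset (Fin k)),
      #((((Fintype.piFinset fun _ : Fin k => Finset.Icc l n).filter
        fun v => ∏ j, v j = n)).filter
      fun v => univ.filter (fun j => l + 1 ≤ v j) = S) =
      (if l ^ (k - i) ∣ n then f i (n / l ^ (k - i)) (l + 1) else 0) := by
    intro S hS
    exact fiber_card_s18 n l k i hn hl S (mem_powersetCard.1 hS).2
  rw [Finset.sum_congr rfl this, Finset.sum_const, Finset.card_powersetCard,
    card_univ, Fintype.card_fin, smul_eq_mul]

lemma sum_dvd (i l d N : ℕ) (hd : 0 < d) :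
    ∑ n ∈ Finset.Icc 1 N, (if d ∣ n then f i (n / d) (l + 1) else 0)
      = ∑ m ∈ Finset.Icc 1 (N / d), f i m (l + 1) := by
  rw [← Finset.sum_filter]
  refine Finset.sum_nbij' (fun n => n / d) (fun m => m * d) ?_ ?_ ?_ ?_ ?_
  · intro n hn
    simp only [mem_filter, mem_Icc] at hn
    obtain ⟨⟨h1, h2⟩, h3⟩ := hn
    simp only [mem_Icc]
    exact ⟨(Nat.one_le_div_iff hd).2 (Nat.le_of_dvd h1 h3), Nat.div_le_div_right h2⟩
  · intro m hm
    simp only [mem_Icc] at hm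
    simp only [mem_filter, mem_Icc]
    exact ⟨⟨Nat.one_le_iff_ne_zero.2 (Nat.mul_ne_zero (by omega) (by omega)),
      (Nat.le_div_iff_mul_le hd).1 hm.2⟩, Dvd.intro_left m rfl⟩
  · intro n hn
    simp only [mem_filter, mem_Icc] at hn
    exact Nat.div_mul_cancel hn.2
  · intro m _
    exact Nat.mul_div_cancel m hd
  · intro n _
    rfl

lemma F_eq_zero {i l' : ℕ} {y : ℝ} (hl' : 0 < l') (h : y < (l' : ℝ) ^ i) :
    F i y l' = 0 := by
  have hfl : ⌊y⌋₊ < l' ^ i := by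
    by_cases hy : 0 ≤ y
    · rw [Nat.floor_lt hy]
      push_cast
      exact h
    · rw [Nat.floor_of_nonpos (le_of_not_ge hy)]
      positivity
  unfold F
  refine Finset.sum_eq_zero fun n hn => ?_
  simp only [mem_Icc] at hn
  unfold f
  rw [Finset.card_eq_zero, Finset.eq_empty_iff_forall_notMem]
  intro v hv
  simp only [mem_filter, Fintype.mem_piFinset, mem_Icc] at hv
  have : l' ^ i ≤ n := by
    rw [← hv.2]
    calc l' ^ i = ∏ _t : Fin i, l' := by rw [prod_const, card_univ, Fintype.card_fin]
    _ ≤ ∏ t, v t := Finset.prod_le_prod' fun t _ => (hv.1 t).1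
  omega

theorem stmt18 (x : ℝ) (hx : 1 ≤ x) (k l : ℕ) (hk : 0 < k) (hl : 0 < l) :
    F k x l =
      ∑ i ∈ (Finset.range (k + 1)).filter (fun i : ℕ =>
          (i : ℤ) ≤ min (k : ℤ)
            ⌈(Real.log x - k * Real.log l) / (Real.log ((l : ℝ) + 1) - Real.log l)⌉),
        Nat.choose k i * F i (x / (l : ℝ) ^ (k - i)) (l + 1) ∧
    ∀ i ≤ k,
      min (k : ℤ)
          ⌈(Real.log x - k * Real.log l) / (Real.log ((l : ℝ) + 1) - Real.log l)⌉
        < (i : ℤ) →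
      F i (x / (l : ℝ) ^ (k - i)) (l + 1) = 0 := by
  have hl1 : (1 : ℝ) ≤ (l : ℝ) := by exact_mod_cast hl
  -- the vanishing claim
  have vanish : ∀ i ≤ k,
      min (k : ℤ)
          ⌈(Real.log x - k * Real.log l) / (Real.log ((l : ℝ) + 1) - Real.log l)⌉
        < (i : ℤ) →
      F i (x / (l : ℝ) ^ (k - i)) (l + 1) = 0 := by
    intro i hik hmin
    set r := (Real.log x - k * Real.log l) / (Real.log ((l : ℝ) + 1) - Real.log l) with hr
    have hceil : (⌈r⌉ : ℤ) < (i : ℤ) := by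
      rcases min_lt_iff.1 hmin with h | h
      · exact absurd h (by exact_mod_cast not_lt.2 hik)
      · exact h
    have hri : r < (i : ℝ) := by
      calc r ≤ (⌈r⌉ : ℝ) := Int.le_ceil r
      _ < (i : ℝ) := by exact_mod_cast hceil
    have hd : 0 < Real.log ((l : ℝ) + 1) - Real.log l :=
      sub_pos.2 (Real.log_lt_log (by linarith) (by linarith))
    have h1 : Real.log x - k * Real.log l <
        (i : ℝ) * (Real.log ((l : ℝ) + 1) - Real.log l) :=
      (div_lt_iff₀ hd).1 hri
    have hcast : ((k - i : ℕ) : ℝ) = (k : ℝ) - (i : ℝ) := by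
      push_cast [Nat.cast_sub hik]; ring
    have h2 : Real.log x < Real.log ((l : ℝ) ^ (k - i) * ((l : ℝ) + 1) ^ i) := by
      rw [Real.log_mul (by positivity) (by positivity), Real.log_pow, Real.log_pow, hcast]
      nlinarith [h1]
    have h3 : x < (l : ℝ) ^ (k - i) * ((l : ℝ) + 1) ^ i :=
      (Real.log_lt_log_iff (by linarith) (by positivity)).1 h2
    have h4 : x / (l : ℝ) ^ (k - i) < ((l : ℝ) + 1) ^ i := by
      rw [div_lt_iff₀ (by positivity)]
      linarith [h3]
    refine F_eq_zero (by omega) ?_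
    push_cast
    exact h4
  refine ⟨?_, vanish⟩
  -- main identity with the full sum
  have hfl : ∀ i : ℕ, ⌊x / (l : ℝ) ^ (k - i)⌋₊ = ⌊x⌋₊ / l ^ (k - i) := by
    intro i
    rw [show ((l : ℝ)) ^ (k - i) = ((l ^ (k - i) : ℕ) : ℝ) by push_cast; ring,
      Nat.floor_div_natCast]
  have main : F k x l = ∑ i ∈ Finset.range (k + 1),
      Nat.choose k i * F i (x / (l : ℝ) ^ (k - i)) (l + 1) := by
    unfold F
    calc ∑ n ∈ Finset.Icc 1 ⌊x⌋₊, f k n l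
        = ∑ n ∈ Finset.Icc 1 ⌊x⌋₊, ∑ i ∈ range (k + 1),
            k.choose i * (if l ^ (k - i) ∣ n then f i (n / l ^ (k - i)) (l + 1) else 0) :=
          Finset.sum_congr rfl fun n hn => f_eq n l k (mem_Icc.1 hn).1 hl
      _ = ∑ i ∈ range (k + 1), ∑ n ∈ Finset.Icc 1 ⌊x⌋₊,
            k.choose i * (if l ^ (k - i) ∣ n then f i (n / l ^ (k - i)) (l + 1) else 0) :=
          Finset.sum_comm
      _ = ∑ i ∈ range (k + 1), k.choose i * ∑ n ∈ Finset.Icc 1 ⌊x⌋₊,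
            (if l ^ (k - i) ∣ n then f i (n / l ^ (k - i)) (l + 1) else 0) := by
          refine Finset.sum_congr rfl fun i _ => ?_
          rw [Finset.mul_sum]
      _ = ∑ i ∈ range (k + 1), k.choose i *
            ∑ m ∈ Finset.Icc 1 (⌊x⌋₊ / l ^ (k - i)), f i m (l + 1) := by
          refine Finset.sum_congr rfl fun i _ => ?_
          rw [sum_dvd i l _ _ (pow_pos hl _)]
      _ = ∑ i ∈ range (k + 1), k.choose i * F i (x / (l : ℝ) ^ (k - i)) (l + 1) := by
          refine Finset.sum_congr rfl fun i _ => ?_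
          rw [F, hfl i]
  rw [main]
  refine (Finset.sum_filter_of_ne fun i hi hne => ?_).symm
  by_contra hp
  rw [not_le] at hp
  have hik : i ≤ k := by
    have := mem_range.1 hi; omega
  exact hne (by rw [vanish i hik hp, mul_zero])
end
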